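/- Every finite group G of order 3^8 or 3^9 with abelianization G^ab ≅ (ZMod 3)³ and d₂(G) = 3 has trivial Schur multiplier: the second group homology H₂(G, ℤ) with trivial coefficients (in Mathlib: groupHomology) is the trivial group. -/

import Mathlib

/-- `d2 G` is the `𝔽₃`-dimension of the second group cohomology `H²(G, ZMod 3)`
with trivial `G`-action. -/
noncomputable def d2 (G : Type) [Group G] : ℕ :=
  Module.finrank (ZMod 3) (groupCohomology (Rep.trivial (ZMod 3) G (ZMod 3)) 2)

/-- The abelianization of `G` is isomorphic to `(ZMod 3)³`. -/
def abIsElemTricyclic (G : Type) [Group G] : Prop :=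
  Nonempty (Abelianization G ≃* Multiplicative (ZMod 3 × ZMod 3 × ZMod 3))

namespace SchurAux

open Subgroup
open scoped commutatorElement

variable {ι : Type}

/-- The canonical map from the free group to the free abelian group (as `ι →₀ ℤ`). -/
noncomputable def alpha (ι : Type) : FreeGroup ι →* Multiplicative (ι →₀ ℤ) :=
  FreeGroup.lift (fun i => Multiplicative.ofAdd (Finsupp.single i 1))

@[simp] lemma alpha_of (i : ι) : alpha ι (FreeGroup.of i) = Multiplicative.ofAdd (Finsupp.single i 1) := by
  simp [alpha]

/-- Retraction of the induced map on abelianizations. -/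
noncomputable def beta (ι : Type) : Multiplicative (ι →₀ ℤ) →* Abelianization (FreeGroup ι) :=
  AddMonoidHom.toMultiplicativeLeft
    ((Finsupp.liftAddHom (fun i => zmultiplesHom _
      (Additive.ofMul (Abelianization.of (FreeGroup.of i))))))

lemma beta_alpha (x : FreeGroup ι) : beta ι (alpha ι x) = Abelianization.of x := by
  have h : ((beta ι).comp (alpha ι)) = (Abelianization.of (G := FreeGroup ι)) := by
    apply FreeGroup.ext_hom
    intro i
    simp [beta, zmultiplesHom]
  calc beta ι (alpha ι x) = ((beta ι).comp (alpha ι)) x := rfl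
    _ = Abelianization.of x := by rw [h]

lemma mem_commutator_of_alpha_eq_one {x : FreeGroup ι} (hx : alpha ι x = 1) :
    x ∈ commutator (FreeGroup ι) := by
  have h1 : Abelianization.of x = 1 := by
    rw [← beta_alpha, hx, map_one]
  rwa [← QuotientGroup.eq_one_iff x]

lemma alpha_commutator_eq_one {x : FreeGroup ι} (hx : x ∈ commutator (FreeGroup ι)) :
    alpha ι x = 1 := by
  have : ⁅(⊤ : Subgroup (FreeGroup ι)), ⊤⁆ ≤ (alpha ι).ker := by
    rw [Subgroup.commutator_le]
    intro a _ b _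
    rw [MonoidHom.mem_ker, map_commutatorElement]
    exact commutatorElement_eq_one_iff_commute.2 (mul_comm _ _)
  exact this hx

lemma eq_one_of_pow_eq_one {x : Multiplicative (ι →₀ ℤ)} {n : ℕ} (hn : n ≠ 0)
    (h : x ^ n = 1) : x = 1 := by
  have hx : n • (Multiplicative.toAdd x) = 0 := h
  have hz : Multiplicative.toAdd x = 0 := by
    ext i
    have h2 : (n • (Multiplicative.toAdd x)) i = 0 := by rw [hx]; rfl
    simp only [Finsupp.smul_apply, smul_eq_mul, Finsupp.coe_zero, Pi.zero_apply] at h2 ⊢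
    have hn' : (n:ℤ) ≠ 0 := Int.natCast_ne_zero.2 hn
    exact (mul_eq_zero.1 h2).resolve_left hn'
  exact hz


def cubes {Γ : Type*} [Group Γ] (H : Subgroup Γ) : Subgroup Γ :=
  Subgroup.closure {x | ∃ r ∈ H, x = r ^ 3}

instance cubes_normal {Γ : Type*} [Group Γ] (H : Subgroup Γ) [hH : H.Normal] :
    (cubes H).Normal := by
  constructor
  intro x hx g
  induction hx using closure_induction with
  | mem y hy =>
    obtain ⟨r, hr, rfl⟩ := hy
    refine subset_closure ⟨g * r * g⁻¹, hH.conj_mem r hr g, ?_⟩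
    rw [conj_pow]
  | one => simpa using (cubes H).one_mem
  | mul y z _ _ hy hz =>
      rw [show g * (y * z) * g⁻¹ = (g * y * g⁻¹) * (g * z * g⁻¹) by group]
      exact (cubes H).mul_mem hy hz
  | inv y _ hy =>
      rw [show g * y⁻¹ * g⁻¹ = (g * y * g⁻¹)⁻¹ by group]
      exact (cubes H).inv_mem hy

lemma cube_mem_cubes {Γ : Type*} [Group Γ] {H : Subgroup Γ} {r : Γ} (hr : r ∈ H) :
    r ^ 3 ∈ cubes H := subset_closure ⟨r, hr, rfl⟩

variable {G : Type} [Group G] (π : FreeGroup ι →* G)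

/-- `N = [F,R]·R³`. -/
def bigN : Subgroup (FreeGroup ι) :=
  ⁅(⊤ : Subgroup (FreeGroup ι)), π.ker⁆ ⊔ cubes π.ker

instance : (bigN π).Normal := by
  unfold bigN; infer_instance

def Nsub : Subgroup ↥π.ker := (bigN π).subgroupOf π.ker

instance : (Nsub π).Normal := Subgroup.Normal.subgroupOf inferInstance π.ker

/-- `R/N` as a (multiplicative) quotient group. -/
def QR := ↥π.ker ⧸ Nsub π

instance : CommGroup (QR π) :=
  { (inferInstance : Group (↥π.ker ⧸ Nsub π)) with
    mul_comm := by
      intro a b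
      induction a using QuotientGroup.induction_on with | H a =>
      induction b using QuotientGroup.induction_on with | H b =>
      show ((a * b : ↥π.ker) : ↥π.ker ⧸ Nsub π) = ↑(b * a)
      rw [QuotientGroup.eq]
      show (((a * b)⁻¹ * (b * a) : ↥π.ker) : FreeGroup ι) ∈ bigN π
      have : (((a * b)⁻¹ * (b * a) : ↥π.ker) : FreeGroup ι) = ⁅(b : FreeGroup ι)⁻¹, (a : FreeGroup ι)⁻¹⁆ := by
        push_cast
        group
      rw [this]
      exact le_sup_left (α := Subgroup (FreeGroup ι))
        (Subgroup.commutator_mem_commutator (Subgroup.mem_top _) (π.ker.inv_mem a.2)) }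

/-- The vector-space version. -/
def VS := Additive (QR π)

instance : AddCommGroup (VS π) := Additive.addCommGroup (α := QR π)

/-- image of an element of `R` in `R/N`, additively. -/
def toVS (z : FreeGroup ι) (hz : z ∈ π.ker) : VS π :=
  Additive.ofMul ((QuotientGroup.mk (⟨z, hz⟩ : ↥π.ker) : QR π))

lemma toVS_mul (z w : FreeGroup ι) (hz : z ∈ π.ker) (hw : w ∈ π.ker) :
    toVS π (z * w) (π.ker.mul_mem hz hw) = toVS π z hz + toVS π w hw := by
  show Additive.ofMul ((QuotientGroup.mk ((⟨z, hz⟩ : ↥π.ker) * ⟨w, hw⟩) : QR π)) = _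
  rw [QuotientGroup.mk_mul]
  rfl

lemma toVS_eq_zero_iff (z : FreeGroup ι) (hz : z ∈ π.ker) :
    toVS π z hz = 0 ↔ z ∈ bigN π := by
  show (QuotientGroup.mk (⟨z, hz⟩ : ↥π.ker) : ↥π.ker ⧸ Nsub π) = 1 ↔ z ∈ bigN π
  rw [QuotientGroup.eq_one_iff]
  exact Iff.rfl

lemma toVS_eq_of_mem (z w : FreeGroup ι) (hz : z ∈ π.ker) (hw : w ∈ π.ker)
    (h : z⁻¹ * w ∈ bigN π) : toVS π z hz = toVS π w hw := by
  show (QuotientGroup.mk (⟨z, hz⟩ : ↥π.ker) : ↥π.ker ⧸ Nsub π) = QuotientGroup.mk ⟨w, hw⟩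
  rw [QuotientGroup.eq]
  exact h

lemma toVS_pow (z : FreeGroup ι) (hz : z ∈ π.ker) (n : ℕ) :
    toVS π (z ^ n) (π.ker.pow_mem hz n) = n • toVS π z hz := by
  show Additive.ofMul ((QuotientGroup.mk ((⟨z, hz⟩ : ↥π.ker) ^ n) : QR π)) = _
  rw [QuotientGroup.mk_pow]
  rw [ofMul_pow]
  rfl

lemma toVS_conj (z f : FreeGroup ι) (hz : z ∈ π.ker) :
    toVS π (f * z * f⁻¹) ((MonoidHom.normal_ker π).conj_mem z hz f) = toVS π z hz := by
  apply toVS_eq_of_mem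
  refine le_sup_left (α := Subgroup (FreeGroup ι)) ?_
  have hc : (f * z * f⁻¹)⁻¹ * z = ⁅f, z⁻¹⁆ := by
    rw [commutatorElement_def]
    group
  rw [hc]
  exact Subgroup.commutator_mem_commutator (Subgroup.mem_top f) (π.ker.inv_mem hz)

instance : Module (ZMod 3) (VS π) := AddCommGroup.zmodModule (by
  intro x
  obtain ⟨q, rfl⟩ : ∃ q : QR π, Additive.ofMul q = x := ⟨Additive.toMul x, rfl⟩
  induction q using QuotientGroup.induction_on with | H r =>
  change Additive.ofMul (α := ↥π.ker ⧸ Nsub π) ((r : ↥π.ker ⧸ Nsub π) ^ 3) = 0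
  have : ((r : ↥π.ker ⧸ Nsub π)) ^ 3 = 1 := by
    rw [← QuotientGroup.mk_pow]
    rw [QuotientGroup.eq_one_iff]
    show ((r ^ 3 : ↥π.ker) : FreeGroup ι) ∈ bigN π
    push_cast
    exact le_sup_right (α := Subgroup (FreeGroup ι)) (cube_mem_cubes r.2)
  exact congrArg Additive.ofMul this)


lemma branchA (π : FreeGroup ι →* G) (hsurj : Function.Surjective π) (k : ℕ)
    (hG : Nat.card G = 3 ^ k)
    (h : π.ker ⊓ commutator (FreeGroup ι) ≤ ⁅(⊤ : Subgroup (FreeGroup ι)), π.ker⁆ ⊔ cubes π.ker) :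
    π.ker ⊓ commutator (FreeGroup ι) ≤ ⁅(⊤ : Subgroup (FreeGroup ι)), π.ker⁆ := by
  set R := π.ker with hR
  set K : Subgroup (FreeGroup ι) := ⁅(⊤ : Subgroup (FreeGroup ι)), R⁆ with hK
  haveI : K.Normal := Subgroup.commutator_normal ⊤ R
  have hKR : K ≤ R := Subgroup.commutator_le_right ⊤ R
  have hKC : K ≤ commutator (FreeGroup ι) := commutator_mono le_top le_top
  set mk : FreeGroup ι →* FreeGroup ι ⧸ K := QuotientGroup.mk' K with hmk
  have hmksurj : Function.Surjective mk := QuotientGroup.mk'_surjective K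
  set A : Subgroup (FreeGroup ι ⧸ K) := R.map mk with hA
  -- A is central
  have hAcentral : A ≤ Subgroup.center (FreeGroup ι ⧸ K) := by
    rintro - ⟨r, hr, rfl⟩
    rw [Subgroup.mem_center_iff]
    intro q
    obtain ⟨f, rfl⟩ := hmksurj q
    have h1 : mk ⁅f, r⁆ = 1 := (QuotientGroup.eq_one_iff _).2
      (Subgroup.commutator_mem_commutator (Subgroup.mem_top f) hr)
    rw [map_commutatorElement] at h1
    exact (commutatorElement_eq_one_iff_commute.1 h1).eq
  -- the induced map to G
  set pbar : (FreeGroup ι ⧸ K) →* G :=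
    QuotientGroup.lift K π (fun x hx => MonoidHom.mem_ker.1 (hKR hx)) with hpbar
  have hpbar_mk : ∀ f, pbar (mk f) = π f := fun f => rfl
  have hpbar_surj : Function.Surjective pbar := by
    intro g; obtain ⟨f, rfl⟩ := hsurj g; exact ⟨mk f, rfl⟩
  have hker_pbar : pbar.ker = A := by
    ext q
    obtain ⟨f, rfl⟩ := hmksurj q
    simp only [MonoidHom.mem_ker, hpbar_mk]
    constructor
    · intro hf
      exact ⟨f, hf, rfl⟩
    · rintro ⟨r, hr, hq⟩
      obtain ⟨n', hn', hcn⟩ := (QuotientGroup.mk'_eq_mk' K).1 hq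
      have h1 : π r = 1 := hr
      have h2 : π n' = 1 := hKR hn'
      rw [← hcn, map_mul, h1, h2, one_mul]
  have hAindex : A.index = 3 ^ k := by
    rw [← hker_pbar, Subgroup.index_eq_card,
      Nat.card_congr (QuotientGroup.quotientKerEquivOfSurjective pbar hpbar_surj).toEquiv, hG]
  have hZdvd : (Subgroup.center (FreeGroup ι ⧸ K)).index ∣ 3 ^ k :=
    hAindex ▸ Subgroup.index_dvd_of_le hAcentral
  haveI : (Subgroup.center (FreeGroup ι ⧸ K)).FiniteIndex :=
    ⟨fun h0 => by rw [h0] at hZdvd; exact (pow_ne_zero k (by norm_num)) (Nat.eq_zero_of_zero_dvd hZdvd)⟩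
  -- commutator of the quotient
  have hCmap : commutator (FreeGroup ι ⧸ K) = (commutator (FreeGroup ι)).map mk := by
    rw [_root_.commutator_def, _root_.commutator_def, Subgroup.map_commutator,
      Subgroup.map_top_of_surjective mk hmksurj]
  -- exponent of central commutator elements, via the transfer
  have hexp : ∀ m ∈ commutator (FreeGroup ι ⧸ K),
      m ^ (Subgroup.center (FreeGroup ι ⧸ K)).index = 1 := by
    intro m hm
    have hCker : commutator (FreeGroup ι ⧸ K) ≤ (MonoidHom.transferCenterPow (FreeGroup ι ⧸ K)).ker := by
      rw [_root_.commutator_def, Subgroup.commutator_le]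
      intro a _ b _
      rw [MonoidHom.mem_ker, map_commutatorElement]
      exact commutatorElement_eq_one_iff_commute.2 (Subtype.ext
        ((Subgroup.mem_center_iff.1 (MonoidHom.transferCenterPow (FreeGroup ι ⧸ K) b).2) _))
    have h1 : MonoidHom.transferCenterPow (FreeGroup ι ⧸ K) m = 1 := hCker hm
    have h2 := MonoidHom.transferCenterPow_apply (G := FreeGroup ι ⧸ K) m
    rw [h1] at h2
    exact h2.symm
  -- the quotient map to the free abelian group
  set ν : (FreeGroup ι ⧸ K) →* Multiplicative (ι →₀ ℤ) :=
    QuotientGroup.lift K (alpha ι) (fun x hx => alpha_commutator_eq_one (hKC hx)) with hν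
  have hν_mk : ∀ f, ν (mk f) = alpha ι f := fun f => rfl
  have hν_comm : ∀ q ∈ commutator (FreeGroup ι ⧸ K), ν q = 1 := by
    intro q hq
    rw [hCmap] at hq
    obtain ⟨c, hc, rfl⟩ := hq
    rw [hν_mk]
    exact alpha_commutator_eq_one hc
  -- cubes of A form a subgroup
  set Acube : Subgroup (FreeGroup ι ⧸ K) :=
    { carrier := {q | ∃ a ∈ A, q = a ^ 3}
      one_mem' := ⟨1, A.one_mem, (one_pow 3).symm⟩
      mul_mem' := by
        rintro - - ⟨a, ha, rfl⟩ ⟨b, hb, rfl⟩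
        have hcomm : Commute a b := (Subgroup.mem_center_iff.1 (hAcentral ha) b).symm
        exact ⟨a * b, A.mul_mem ha hb, (hcomm.mul_pow 3).symm⟩
      inv_mem' := by
        rintro - ⟨a, ha, rfl⟩
        exact ⟨a⁻¹, A.inv_mem ha, (inv_pow a 3).symm⟩ } with hAcube
  -- the key divisibility step
  have step : ∀ m ∈ A ⊓ commutator (FreeGroup ι ⧸ K),
      ∃ a ∈ A ⊓ commutator (FreeGroup ι ⧸ K), m = a ^ 3 := by
    rintro m ⟨hmA, hmC⟩
    obtain ⟨r, hrR, rfl⟩ := hmA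
    have hrC : r ∈ commutator (FreeGroup ι) := by
      rw [hCmap] at hmC
      obtain ⟨c, hc, hcr⟩ := hmC
      obtain ⟨n', hn', hcn⟩ := (QuotientGroup.mk'_eq_mk' K).1 hcr
      rw [← hcn]
      exact (commutator (FreeGroup ι)).mul_mem hc (hKC hn')
    have hrN : r ∈ K ⊔ cubes R := h ⟨hrR, hrC⟩
    have hmem : mk r ∈ (K ⊔ cubes R).map mk := Subgroup.mem_map_of_mem mk hrN
    rw [Subgroup.map_sup] at hmem
    have hKbot : K.map mk = ⊥ := by
      rw [eq_bot_iff]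
      rintro - ⟨x, hx, rfl⟩
      have hx1 : (x : FreeGroup ι ⧸ K) = 1 := (QuotientGroup.eq_one_iff x).2 hx
      rw [Subgroup.mem_bot]
      exact hx1
    rw [hKbot, bot_sup_eq] at hmem
    have hcub : (cubes R).map mk ≤ Acube := by
      rw [cubes, MonoidHom.map_closure, Subgroup.closure_le]
      rintro - ⟨x, ⟨r', hr', rfl⟩, rfl⟩
      exact ⟨mk r', Subgroup.mem_map_of_mem mk hr', by rw [map_pow]⟩
    obtain ⟨a, haA, hacube⟩ := hcub hmem
    refine ⟨a, ⟨haA, ?_⟩, hacube⟩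
    -- a is also in the commutator: ν a has cube 1
    obtain ⟨r'', hr'', rfl⟩ := haA
    have hν3 : (ν (mk r'')) ^ 3 = 1 := by
      rw [← map_pow, ← hacube]
      exact hν_comm _ hmC
    have hν1 : alpha ι r'' = 1 := by
      have := eq_one_of_pow_eq_one (n := 3) (by norm_num) hν3
      rwa [hν_mk] at this
    rw [hCmap]
    exact Subgroup.mem_map_of_mem mk (mem_commutator_of_alpha_eq_one hν1)
  have iter : ∀ j : ℕ, ∀ m ∈ A ⊓ commutator (FreeGroup ι ⧸ K),
      ∃ a ∈ A ⊓ commutator (FreeGroup ι ⧸ K), m = a ^ 3 ^ j := by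
    intro j
    induction j with
    | zero => intro m hm; exact ⟨m, hm, by simp⟩
    | succ j ih =>
      intro m hm
      obtain ⟨a, ha, hma⟩ := step m hm
      obtain ⟨b, hb, hab⟩ := ih a ha
      exact ⟨b, hb, by rw [hma, hab, ← pow_mul, ← pow_succ]⟩
  intro x hx
  have hmkx : mk x ∈ A ⊓ commutator (FreeGroup ι ⧸ K) :=
    ⟨Subgroup.mem_map_of_mem mk hx.1, by rw [hCmap]; exact Subgroup.mem_map_of_mem mk hx.2⟩
  obtain ⟨a, ha, hxa⟩ := iter k (mk x) hmkx
  have hone : a ^ (3:ℕ) ^ k = 1 := by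
    obtain ⟨t, ht⟩ := hZdvd
    rw [ht, pow_mul, hexp a ha.2, one_pow]
  have : mk x = 1 := by rw [hxa, hone]
  exact (QuotientGroup.eq_one_iff x).1 this

section Cocycles

open groupCohomology

variable (hsurj : Function.Surjective π)

/-- a set-theoretic section of `π`. -/
noncomputable def sec : G → FreeGroup ι := Function.surjInv hsurj

lemma sec_spec (g : G) : π (sec π hsurj g) = g := Function.surjInv_eq hsurj g

lemma relt_mem (g h : G) :
    sec π hsurj g * sec π hsurj h * (sec π hsurj (g * h))⁻¹ ∈ π.ker := by
  rw [MonoidHom.mem_ker, map_mul, map_mul, map_inv, sec_spec, sec_spec, sec_spec,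
    mul_inv_eq_one]

lemma toVS_congr {z w : FreeGroup ι} (hz : z ∈ π.ker) (hw : w ∈ π.ker) (h : z = w) :
    toVS π z hz = toVS π w hw := by
  apply toVS_eq_of_mem
  rw [h, inv_mul_cancel]
  exact (bigN π).one_mem

/-- the transgression cocycle attached to a functional on `R/N`. -/
noncomputable def cocyc (φ : VS π →ₗ[ZMod 3] ZMod 3) : G × G → ZMod 3 :=
  fun p => φ (toVS π _ (relt_mem π hsurj p.1 p.2))

lemma cocyc_mem_twoCocycles (φ : VS π →ₗ[ZMod 3] ZMod 3) :
    cocyc π hsurj φ ∈ cocycles₂ (Rep.trivial (ZMod 3) G (ZMod 3)) := by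
  rw [mem_cocycles₂_iff]
  intro g h j
  show cocyc π hsurj φ (g * h, j) + cocyc π hsurj φ (g, h) =
      cocyc π hsurj φ (h, j) + cocyc π hsurj φ (g, h * j)
  unfold cocyc
  rw [← map_add φ, ← map_add φ]
  congr 1
  have hCC := relt_mem π hsurj (g * h) j
  have hD := relt_mem π hsurj g h
  have hA := relt_mem π hsurj h j
  have hB := relt_mem π hsurj g (h * j)
  have hconj : sec π hsurj g * (sec π hsurj h * sec π hsurj j * (sec π hsurj (h * j))⁻¹) *
      (sec π hsurj g)⁻¹ ∈ π.ker :=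
    (MonoidHom.normal_ker π).conj_mem _ hA (sec π hsurj g)
  have e1 := toVS_mul π _ _ hD hCC
  have e2 := toVS_mul π _ _ hconj hB
  have e3 := toVS_conj π _ (sec π hsurj g) hA
  have e4 : toVS π _ (π.ker.mul_mem hD hCC) = toVS π _ (π.ker.mul_mem hconj hB) :=
    toVS_congr π _ _ (by rw [mul_assoc g h j]; group)
  calc toVS π _ hCC + toVS π _ hD
      = toVS π _ hD + toVS π _ hCC := add_comm _ _
    _ = toVS π _ (π.ker.mul_mem hD hCC) := e1.symm
    _ = toVS π _ (π.ker.mul_mem hconj hB) := e4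
    _ = toVS π _ hconj + toVS π _ hB := e2
    _ = toVS π _ hA + toVS π _ hB := by rw [e3]

variable {π} in
/-- If the transgression cocycle is a coboundary, the functional kills products of
commutators and cubes. -/
lemma kills_of_coboundary (φ : VS π →ₗ[ZMod 3] ZMod 3) (x : G → ZMod 3)
    (hx : cocyc π hsurj φ = (d₁₂ (Rep.trivial (ZMod 3) G (ZMod 3))).hom x)
    {z : FreeGroup ι} (hz : z ∈ π.ker)
    (hzc : z ∈ commutator (FreeGroup ι) ⊔ cubes (⊤ : Subgroup (FreeGroup ι))) :
    φ (toVS π z hz) = 0 := by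
  have secmem : ∀ f : FreeGroup ι, f * (sec π hsurj (π f))⁻¹ ∈ π.ker := by
    intro f
    rw [MonoidHom.mem_ker, map_mul, map_inv, sec_spec, mul_inv_eq_one]
  set ψ : FreeGroup ι → ZMod 3 :=
    fun f => φ (toVS π (f * (sec π hsurj (π f))⁻¹) (secmem f)) + x (π f) with hψ
  have hcocyc : ∀ g₁ g₂ : G, φ (toVS π _ (relt_mem π hsurj g₁ g₂)) =
      x g₂ - x (g₁ * g₂) + x g₁ := by
    intro g₁ g₂
    have h0 := congrFun hx (g₁, g₂)
    unfold cocyc at h0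
    exact h0
  have hadd : ∀ f₁ f₂, ψ (f₁ * f₂) = ψ f₁ + ψ f₂ := by
    intro f₁ f₂
    have hr₁ := secmem f₁
    have hr₂ := secmem f₂
    have hrel := relt_mem π hsurj (π f₁) (π f₂)
    have hπmul : π (f₁ * f₂) = π f₁ * π f₂ := map_mul π f₁ f₂
    have hmem0 : f₁ * f₂ * (sec π hsurj (π f₁ * π f₂))⁻¹ ∈ π.ker := by
      rw [MonoidHom.mem_ker, map_mul, map_inv, map_mul, sec_spec, mul_inv_eq_one]
    have hconj : sec π hsurj (π f₁) * (f₂ * (sec π hsurj (π f₂))⁻¹) *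
        (sec π hsurj (π f₁))⁻¹ ∈ π.ker :=
      (MonoidHom.normal_ker π).conj_mem _ hr₂ _
    have hmem2 : (f₁ * (sec π hsurj (π f₁))⁻¹) * (sec π hsurj (π f₁) *
        (f₂ * (sec π hsurj (π f₂))⁻¹) * (sec π hsurj (π f₁))⁻¹) ∈ π.ker :=
      π.ker.mul_mem hr₁ hconj
    have hid : f₁ * f₂ * (sec π hsurj (π f₁ * π f₂))⁻¹ =
        ((f₁ * (sec π hsurj (π f₁))⁻¹) * (sec π hsurj (π f₁) *
          (f₂ * (sec π hsurj (π f₂))⁻¹) * (sec π hsurj (π f₁))⁻¹)) *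
        (sec π hsurj (π f₁) * sec π hsurj (π f₂) * (sec π hsurj (π f₁ * π f₂))⁻¹) := by
      group
    calc ψ (f₁ * f₂)
        = φ (toVS π _ (secmem (f₁ * f₂))) + x (π (f₁ * f₂)) := rfl
      _ = φ (toVS π _ hmem0) + x (π f₁ * π f₂) := by
          rw [toVS_congr π (secmem (f₁ * f₂)) hmem0 (by rw [hπmul]), hπmul]
      _ = φ (toVS π _ (π.ker.mul_mem hmem2 hrel)) + x (π f₁ * π f₂) := by
          rw [toVS_congr π hmem0 (π.ker.mul_mem hmem2 hrel) hid]
      _ = φ (toVS π _ hr₁) + φ (toVS π _ hr₂) +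
            (x (π f₂) - x (π f₁ * π f₂) + x (π f₁)) + x (π f₁ * π f₂) := by
          rw [toVS_mul π _ _ hmem2 hrel, toVS_mul π _ _ hr₁ hconj, toVS_conj π _ _ hr₂,
            map_add, map_add, hcocyc (π f₁) (π f₂)]
          try ring
      _ = ψ f₁ + ψ f₂ := by
          show _ = φ (toVS π _ (secmem f₁)) + x (π f₁) + (φ (toVS π _ (secmem f₂)) + x (π f₂))
          try ring
  set Ψ : FreeGroup ι →* Multiplicative (ZMod 3) :=
    MonoidHom.mk' (fun f => Multiplicative.ofAdd (ψ f)) (fun a b => by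
      show Multiplicative.ofAdd (ψ (a * b)) = Multiplicative.ofAdd (ψ a) * Multiplicative.ofAdd (ψ b)
      rw [hadd]
      rfl) with hΨ
  have hΨval : ∀ f, Multiplicative.toAdd (Ψ f) = ψ f := fun f => rfl
  have hψone : ψ 1 = 0 := by
    have h1 := map_one Ψ
    have h2 : Multiplicative.ofAdd (ψ 1) = Multiplicative.ofAdd 0 := h1
    exact Multiplicative.ofAdd.injective h2
  have hψR : ∀ w (hw : w ∈ π.ker), ψ w = φ (toVS π w hw) := by
    intro w hw
    have hw1 : π w = 1 := hw
    have hsec1 : (sec π hsurj 1)⁻¹ ∈ π.ker := by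
      rw [MonoidHom.mem_ker, map_inv, sec_spec, inv_one]
    have hone : ψ 1 = φ (toVS π (sec π hsurj 1)⁻¹ hsec1) + x 1 := by
      calc ψ 1 = φ (toVS π _ (secmem 1)) + x (π 1) := rfl
        _ = _ := by
            rw [toVS_congr π (secmem 1) hsec1 (by rw [map_one, one_mul]), map_one]
    have h0 : φ (toVS π (sec π hsurj 1)⁻¹ hsec1) + x 1 = 0 := by rw [← hone]; exact hψone
    calc ψ w = φ (toVS π _ (secmem w)) + x (π w) := rfl
      _ = φ (toVS π (w * (sec π hsurj 1)⁻¹) (π.ker.mul_mem hw hsec1)) + x 1 := by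
          rw [toVS_congr π (secmem w) (π.ker.mul_mem hw hsec1) (by rw [hw1]), hw1]
      _ = φ (toVS π w hw) + (φ (toVS π (sec π hsurj 1)⁻¹ hsec1) + x 1) := by
          rw [toVS_mul π _ _ hw hsec1, map_add]
          ring
      _ = φ (toVS π w hw) := by rw [h0, add_zero]
  have h3tor : ∀ a : ZMod 3, (3 : ℕ) • a = 0 := by decide
  have hkill : commutator (FreeGroup ι) ⊔ cubes (⊤ : Subgroup (FreeGroup ι)) ≤ Ψ.ker := by
    apply sup_le
    · rw [_root_.commutator_def, Subgroup.commutator_le]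
      intro a _ b _
      rw [MonoidHom.mem_ker, map_commutatorElement]
      exact commutatorElement_eq_one_iff_commute.2 (mul_comm _ _)
    · rw [cubes, Subgroup.closure_le]
      rintro - ⟨r, -, rfl⟩
      rw [SetLike.mem_coe, MonoidHom.mem_ker, map_pow]
      apply Multiplicative.toAdd.injective
      rw [toAdd_pow]
      exact h3tor _
  have hΨz : Ψ z = 1 := hkill hzc
  have hz0 : ψ z = 0 := by
    rw [← hΨval, hΨz]
    rfl
  rw [← hψR z hz, hz0]

end Cocycles

section BranchB

open groupCohomology

variable {ι : Type} {G : Type} [Group G]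

/-- every homomorphism from the free group to a commutative group factors through `alpha`. -/
lemma alpha_factor {M : Type*} [CommGroup M] (q : FreeGroup ι →* M) :
    ∃ γ : Multiplicative (ι →₀ ℤ) →* M, ∀ w, γ (alpha ι w) = q w := by
  refine ⟨AddMonoidHom.toMultiplicativeLeft
    (Finsupp.liftAddHom (fun i => zmultiplesHom _ (Additive.ofMul (q (FreeGroup.of i))))), ?_⟩
  intro w
  have h : (AddMonoidHom.toMultiplicativeLeft
      (Finsupp.liftAddHom (fun i => zmultiplesHom _
        (Additive.ofMul (q (FreeGroup.of i)))))).comp (alpha ι) = q := by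
    apply FreeGroup.ext_hom
    intro i
    simp [alpha, zmultiplesHom]
  calc _ = ((AddMonoidHom.toMultiplicativeLeft
      (Finsupp.liftAddHom (fun i => zmultiplesHom _
        (Additive.ofMul (q (FreeGroup.of i)))))).comp (alpha ι)) w := rfl
    _ = q w := by rw [h]

lemma alpha_bigN (π : FreeGroup ι →* G) :
    (bigN π).map (alpha ι) ≤ (π.ker.map (alpha ι)).map (powMonoidHom 3) := by
  rw [bigN, Subgroup.map_sup]
  apply sup_le
  · rintro - ⟨x, hx, rfl⟩
    have : alpha ι x = 1 := alpha_commutator_eq_one (commutator_mono le_top le_top hx)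
    rw [this]
    exact Subgroup.one_mem _
  · rw [cubes, MonoidHom.map_closure, Subgroup.closure_le]
    rintro - ⟨x, ⟨r, hr, rfl⟩, rfl⟩
    exact ⟨alpha ι r, Subgroup.mem_map_of_mem _ hr, by rw [powMonoidHom_apply, map_pow]⟩

lemma branchB [Finite G] (π : FreeGroup ι →* G) (hsurj : Function.Surjective π)
    (e : Abelianization G ≃* Multiplicative (ZMod 3 × ZMod 3 × ZMod 3))
    {x₀ : FreeGroup ι} (hx₀R : x₀ ∈ π.ker) (hx₀C : x₀ ∈ commutator (FreeGroup ι))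
    (hx₀N : x₀ ∉ bigN π) :
    4 ≤ Module.finrank (ZMod 3) (H2 (Rep.trivial (ZMod 3) G (ZMod 3))) := by
  have hofsurj : Function.Surjective (Abelianization.of (G := G)) := fun a =>
    QuotientGroup.induction_on a (fun g => ⟨g, rfl⟩)
  set v1 : ZMod 3 × ZMod 3 × ZMod 3 := (1, 0, 0) with hv1
  set v2 : ZMod 3 × ZMod 3 × ZMod 3 := (0, 1, 0) with hv2
  set v3 : ZMod 3 × ZMod 3 × ZMod 3 := (0, 0, 1) with hv3
  obtain ⟨g1, hg1⟩ := hofsurj (e.symm (Multiplicative.ofAdd v1))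
  obtain ⟨g2, hg2⟩ := hofsurj (e.symm (Multiplicative.ofAdd v2))
  obtain ⟨g3, hg3⟩ := hofsurj (e.symm (Multiplicative.ofAdd v3))
  set f1 := sec π hsurj g1 with hf1
  set f2 := sec π hsurj g2 with hf2
  set f3 := sec π hsurj g3 with hf3
  have hcommG : commutator G = (commutator (FreeGroup ι)).map π := by
    rw [_root_.commutator_def, _root_.commutator_def, Subgroup.map_commutator,
      Subgroup.map_top_of_surjective π hsurj]
  -- cubes of the `f i` map into the commutator subgroup of `G`
  have hcube : ∀ (ff : FreeGroup ι) (gg : G), π ff = gg →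
      Abelianization.of gg = e.symm (Multiplicative.ofAdd v1) ∨
      Abelianization.of gg = e.symm (Multiplicative.ofAdd v2) ∨
      Abelianization.of gg = e.symm (Multiplicative.ofAdd v3) →
      π (ff ^ 3) ∈ commutator G := by
    intro ff gg hπ hcase
    have h3 : ∀ v : ZMod 3 × ZMod 3 × ZMod 3, (Multiplicative.ofAdd v) ^ 3 = 1 := by
      intro v
      have : (3 : ℕ) • v = 0 := by
        rcases v with ⟨a, b, c⟩
        show ((3:ℕ) • a, (3:ℕ) • b, (3:ℕ) • c) = (0, 0, 0)
        have h : ∀ x : ZMod 3, (3:ℕ) • x = 0 := by decide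
        rw [h, h, h]
      calc (Multiplicative.ofAdd v) ^ 3 = Multiplicative.ofAdd ((3:ℕ) • v) := rfl
        _ = 1 := by rw [this]; rfl
    have h5 : Abelianization.of (π (ff ^ 3)) = 1 := by
      rw [map_pow, map_pow, hπ]
      rcases hcase with hc | hc | hc <;>
        rw [hc, ← map_pow, h3, map_one]
    exact (QuotientGroup.eq_one_iff _).1 h5
  have hc1 : π (f1 ^ 3) ∈ commutator G := hcube f1 g1 (sec_spec π hsurj g1) (Or.inl hg1)
  have hc2 : π (f2 ^ 3) ∈ commutator G := hcube f2 g2 (sec_spec π hsurj g2) (Or.inr (Or.inl hg2))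
  have hc3 : π (f3 ^ 3) ∈ commutator G := hcube f3 g3 (sec_spec π hsurj g3) (Or.inr (Or.inr hg3))
  rw [hcommG] at hc1 hc2 hc3
  obtain ⟨c1, hc1C, hc1π⟩ := hc1
  obtain ⟨c2, hc2C, hc2π⟩ := hc2
  obtain ⟨c3, hc3C, hc3π⟩ := hc3
  set y1 := f1 ^ 3 * c1⁻¹ with hy1
  set y2 := f2 ^ 3 * c2⁻¹ with hy2
  set y3 := f3 ^ 3 * c3⁻¹ with hy3
  have hyR : ∀ (ff cc : FreeGroup ι), π cc = π (ff ^ 3) → ff ^ 3 * cc⁻¹ ∈ π.ker := by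
    intro ff cc hπ
    rw [MonoidHom.mem_ker, map_mul, map_inv, hπ, mul_inv_cancel]
  have hy1R : y1 ∈ π.ker := hyR f1 c1 hc1π
  have hy2R : y2 ∈ π.ker := hyR f2 c2 hc2π
  have hy3R : y3 ∈ π.ker := hyR f3 c3 hc3π
  have hyFc : ∀ (ff cc : FreeGroup ι), cc ∈ commutator (FreeGroup ι) →
      ff ^ 3 * cc⁻¹ ∈ commutator (FreeGroup ι) ⊔ cubes (⊤ : Subgroup (FreeGroup ι)) := by
    intro ff cc hcc
    exact Subgroup.mul_mem _
      (le_sup_right (α := Subgroup (FreeGroup ι)) (cube_mem_cubes (Subgroup.mem_top ff)))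
      (Subgroup.inv_mem _ (le_sup_left (α := Subgroup (FreeGroup ι)) hcc))
  set E : Fin 4 → VS π := ![toVS π x₀ hx₀R, toVS π y1 hy1R, toVS π y2 hy2R, toVS π y3 hy3R]
    with hE
  -- cast of scalars
  have hcast : ∀ (a : ZMod 3) (v : VS π), a • v = a.val • v := by
    intro a v
    calc a • v = ((a.val : ℕ) : ZMod 3) • v := by rw [ZMod.natCast_rightInverse a]
      _ = a.val • v := Nat.cast_smul_eq_nsmul _ _ _
  -- linear independence of E
  have hEind : LinearIndependent (ZMod 3) E := by
    rw [Fintype.linearIndependent_iff]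
    intro c hc
    rw [Fin.sum_univ_four] at hc
    have hcopy := hc
    have hE0 : E 0 = toVS π x₀ hx₀R := rfl
    have hE1 : E 1 = toVS π y1 hy1R := rfl
    have hE2 : E 2 = toVS π y2 hy2R := rfl
    have hE3 : E 3 = toVS π y3 hy3R := rfl
    rw [hE0, hE1, hE2, hE3, hcast, hcast, hcast, hcast] at hc
    set b0 := (c 0).val
    set b1 := (c 1).val
    set b2 := (c 2).val
    set b3 := (c 3).val
    rw [← toVS_pow π _ hx₀R b0, ← toVS_pow π _ hy1R b1, ← toVS_pow π _ hy2R b2,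
      ← toVS_pow π _ hy3R b3] at hc
    rw [← toVS_mul π _ _ (π.ker.pow_mem hx₀R b0) (π.ker.pow_mem hy1R b1)] at hc
    rw [← toVS_mul π _ _ (π.ker.mul_mem (π.ker.pow_mem hx₀R b0) (π.ker.pow_mem hy1R b1))
      (π.ker.pow_mem hy2R b2)] at hc
    rw [← toVS_mul π _ _ (π.ker.mul_mem (π.ker.mul_mem (π.ker.pow_mem hx₀R b0)
      (π.ker.pow_mem hy1R b1)) (π.ker.pow_mem hy2R b2)) (π.ker.pow_mem hy3R b3)] at hc
    rw [toVS_eq_zero_iff] at hc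
    -- push into the free abelian group
    have hZmem := alpha_bigN π (Subgroup.mem_map_of_mem (alpha ι) hc)
    set P := alpha ι f1 ^ b1 * alpha ι f2 ^ b2 * alpha ι f3 ^ b3 with hP
    have hyα : ∀ (ff cc : FreeGroup ι), cc ∈ commutator (FreeGroup ι) →
        alpha ι (ff ^ 3 * cc⁻¹) = alpha ι ff ^ 3 := by
      intro ff cc hcc
      rw [map_mul, map_pow, map_inv, alpha_commutator_eq_one hcc, inv_one, mul_one]
    have hαZ : alpha ι (x₀ ^ b0 * y1 ^ b1 * y2 ^ b2 * y3 ^ b3) = P ^ 3 := by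
      rw [map_mul, map_mul, map_mul, map_pow, map_pow, map_pow, map_pow,
        alpha_commutator_eq_one hx₀C, one_pow, one_mul,
        hyα f1 c1 hc1C, hyα f2 c2 hc2C, hyα f3 c3 hc3C, hP]
      rw [mul_pow, mul_pow]
      rw [← pow_mul, ← pow_mul, ← pow_mul, ← pow_mul, ← pow_mul, ← pow_mul]
      rw [mul_comm b1 3, mul_comm b2 3, mul_comm b3 3]
    rw [hαZ] at hZmem
    obtain ⟨u, hu, huP⟩ := hZmem
    rw [powMonoidHom_apply] at huP
    have hPu : P = u := by
      have h9 : (P * u⁻¹) ^ 3 = 1 := by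
        rw [mul_pow, inv_pow, huP, mul_inv_cancel]
      have := eq_one_of_pow_eq_one (n := 3) (by norm_num) h9
      rwa [mul_inv_eq_one] at this
    -- factor through the abelianization of G
    set q : FreeGroup ι →* Multiplicative (ZMod 3 × ZMod 3 × ZMod 3) :=
      (e.toMonoidHom.comp Abelianization.of).comp π with hq
    obtain ⟨γ, hγ⟩ := alpha_factor q
    have hqf : ∀ (ff : FreeGroup ι) (gg : G) (vv : ZMod 3 × ZMod 3 × ZMod 3), π ff = gg →
        Abelianization.of gg = e.symm (Multiplicative.ofAdd vv) →
        q ff = Multiplicative.ofAdd vv := by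
      intro ff gg vv h1 h2
      show e (Abelianization.of (π ff)) = _
      rw [h1, h2, MulEquiv.apply_symm_apply]
    have hγP : γ P = Multiplicative.ofAdd v1 ^ b1 * Multiplicative.ofAdd v2 ^ b2 *
        Multiplicative.ofAdd v3 ^ b3 := by
      rw [hP, map_mul, map_mul, map_pow, map_pow, map_pow, hγ, hγ, hγ,
        hqf f1 g1 v1 (sec_spec π hsurj g1) hg1,
        hqf f2 g2 v2 (sec_spec π hsurj g2) hg2,
        hqf f3 g3 v3 (sec_spec π hsurj g3) hg3]
    have hγu : γ u = 1 := by
      obtain ⟨r, hr, rfl⟩ := hu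
      rw [hγ]
      show e (Abelianization.of (π r)) = 1
      have : π r = 1 := hr
      rw [this, map_one, map_one]
    have hvanish : Multiplicative.ofAdd v1 ^ b1 * Multiplicative.ofAdd v2 ^ b2 *
        Multiplicative.ofAdd v3 ^ b3 = 1 := by
      rw [← hγP, hPu, hγu]
    -- read off the components
    have hadd : (b1 : ZMod 3) = 0 ∧ (b2 : ZMod 3) = 0 ∧ (b3 : ZMod 3) = 0 := by
      have h10 : Multiplicative.toAdd (Multiplicative.ofAdd v1 ^ b1 *
          Multiplicative.ofAdd v2 ^ b2 * Multiplicative.ofAdd v3 ^ b3) =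
          b1 • v1 + b2 • v2 + b3 • v3 := rfl
      rw [hvanish] at h10
      have h11 : b1 • v1 + b2 • v2 + b3 • v3 = 0 := h10.symm
      rw [hv1, hv2, hv3] at h11
      have h12 : ∀ (n : ℕ) (x y z : ZMod 3), n • ((x, y, z) : ZMod 3 × ZMod 3 × ZMod 3) =
          (n • x, n • y, n • z) := fun n x y z => rfl
      rw [h12, h12, h12] at h11
      have h13 : ∀ n : ℕ, n • (1 : ZMod 3) = (n : ZMod 3) := fun n => by
        rw [nsmul_eq_mul, mul_one]
      rw [h13, h13, h13] at h11
      simp only [smul_zero] at h11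
      have h14 : (((b1:ZMod 3) + 0 + 0, (0:ZMod 3) + (b2:ZMod 3) + 0,
          (0:ZMod 3) + 0 + (b3:ZMod 3)) : ZMod 3 × ZMod 3 × ZMod 3) = (0, 0, 0) := h11
      rw [Prod.mk.injEq, Prod.mk.injEq] at h14
      refine ⟨?_, ?_, ?_⟩
      · have := h14.1; rwa [add_zero, add_zero] at this
      · have := h14.2.1; rwa [zero_add, add_zero] at this
      · have := h14.2.2; rwa [zero_add, zero_add] at this
    have hcval : ∀ i : Fin 4, ((c i).val : ZMod 3) = c i := fun i =>
      ZMod.natCast_rightInverse (c i)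
    have hc1z : c 1 = 0 := by rw [← hcval 1]; exact hadd.1
    have hc2z : c 2 = 0 := by rw [← hcval 2]; exact hadd.2.1
    have hc3z : c 3 = 0 := by rw [← hcval 3]; exact hadd.2.2
    -- now the x₀ component
    have hc0z : c 0 = 0 := by
      by_contra hne
      have hsum := hc
      -- recover the statement about c 0 • E 0 from scratch
      have hEz : c 0 • E 0 = 0 := by
        have h20 := hcopy
        rw [hc1z, hc2z, hc3z, zero_smul, zero_smul, zero_smul, add_zero, add_zero,
          add_zero] at h20
        exact h20
      have hE0ne : E 0 ≠ 0 := by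
        rw [hE]
        show toVS π x₀ hx₀R ≠ 0
        rw [Ne, toVS_eq_zero_iff]
        exact hx₀N
      have : E 0 = 0 := by
        calc E 0 = (c 0)⁻¹ • (c 0 • E 0) := (inv_smul_smul₀ hne (E 0)).symm
          _ = 0 := by rw [hEz, smul_zero]
      exact hE0ne this
    intro i
    fin_cases i
    · exact hc0z
    · exact hc1z
    · exact hc2z
    · exact hc3z
  -- dual functionals
  set U := Submodule.span (ZMod 3) (Set.range E) with hU
  set bU : Module.Basis (Fin 4) (ZMod 3) U := Module.Basis.span hEind with hbU
  obtain ⟨W, hW⟩ := Submodule.exists_isCompl U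
  set proj := U.projectionOnto W hW with hproj
  set φs : Fin 4 → (VS π →ₗ[ZMod 3] ZMod 3) := fun jj => (bU.coord jj).comp proj with hφs
  have hφE : ∀ jj ll : Fin 4, φs jj (E ll) = if ll = jj then 1 else 0 := by
    intro jj ll
    show bU.coord jj (proj (E ll)) = _
    have h1 : E ll = (bU ll : VS π) := congrArg Subtype.val (Module.Basis.span_apply hEind ll).symm
    rw [h1]
    rw [Submodule.projectionOnto_apply_left hW (bU ll)]
    rw [Module.Basis.coord_apply, Module.Basis.repr_self, Finsupp.single_apply]
  -- the cocycle classes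
  set A := Rep.trivial (ZMod 3) G (ZMod 3) with hA
  set cls : Fin 4 → H2 A := fun jj =>
    H2π A ⟨cocyc π hsurj (φs jj), cocyc_mem_twoCocycles π hsurj (φs jj)⟩ with hcls
  have hclsind : LinearIndependent (ZMod 3) cls := by
    rw [Fintype.linearIndependent_iff]
    intro d hd
    set φsum : VS π →ₗ[ZMod 3] ZMod 3 := ∑ jj, d jj • φs jj with hφsum
    set Z : Fin 4 → cocycles₂ A := fun jj =>
      ⟨cocyc π hsurj (φs jj), cocyc_mem_twoCocycles π hsurj (φs jj)⟩ with hZ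
    have hsum2 : (∑ jj, d jj • Z jj) =
        (⟨cocyc π hsurj φsum, cocyc_mem_twoCocycles π hsurj φsum⟩ : cocycles₂ A) := by
      apply Subtype.coe_injective
      show (cocycles₂ A).subtype (∑ jj, d jj • Z jj) = cocyc π hsurj φsum
      rw [map_sum]
      try simp only [map_smul]
      funext p
      rw [Finset.sum_apply]
      show ∑ jj, (d jj • cocyc π hsurj (φs jj)) p =
        φsum (toVS π _ (relt_mem π hsurj p.1 p.2))
      rw [hφsum, LinearMap.sum_apply]
      exact Finset.sum_congr rfl (fun jj _ => rfl)
    have hd0 : H2π A (∑ jj, d jj • Z jj) = 0 := by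
      have : H2π A (∑ jj, d jj • Z jj) = ∑ jj, d jj • H2π A (Z jj) := by
        rw [map_sum]
        try simp only [map_smul]
      rw [this]
      exact hd
    rw [hsum2] at hd0
    have hmem : cocyc π hsurj φsum ∈
        coboundaries₂ A := (H2π_eq_zero_iff _).1 hd0
    obtain ⟨xx, hxx⟩ := hmem
    have hxx' : cocyc π hsurj φsum = (d₁₂ (Rep.trivial (ZMod 3) G (ZMod 3))).hom xx :=
      hxx.symm
    have hkill : ∀ ll : Fin 4, φsum (E ll) = 0 := by
      intro ll
      fin_cases ll
      · exact kills_of_coboundary hsurj φsum xx hxx' hx₀R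
          (le_sup_left (α := Subgroup (FreeGroup ι)) hx₀C)
      · exact kills_of_coboundary hsurj φsum xx hxx' hy1R (hyFc f1 c1 hc1C)
      · exact kills_of_coboundary hsurj φsum xx hxx' hy2R (hyFc f2 c2 hc2C)
      · exact kills_of_coboundary hsurj φsum xx hxx' hy3R (hyFc f3 c3 hc3C)
    intro jj
    have h1 : φsum (E jj) = d jj := by
      rw [hφsum, LinearMap.sum_apply]
      simp only [LinearMap.smul_apply]
      fin_cases jj <;> simp [hφE]
    rw [hkill jj] at h1
    exact h1.symm
  have hcard : 4 ≤ Module.finrank (ZMod 3) (H2 A) := by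
    haveI : Finite (CoeSort.coe A) := inferInstanceAs (Finite (ZMod 3))
    haveI : Finite (G × G → CoeSort.coe A) := inferInstance
    haveI : Finite (cocycles₂ A) := inferInstance
    haveI : Finite (H2 A) :=
      Finite.of_surjective _ ((ModuleCat.epi_iff_surjective (H2π A)).1 inferInstance)
    haveI : Module.Finite (ZMod 3) (H2 A) := Module.Finite.of_finite
    simpa using hclsind.fintype_card_le_finrank
  exact hcard

end BranchB
end SchurAux

/-- Every finite group `G` of order `3^8` or `3^9` with `G^ab ≅ (ZMod 3)³` and
`d₂(G) = 3` has trivial Schur multiplier `H₂(G, ℤ) = 0`.  Since this version of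
Mathlib does not yet contain `groupHomology`, the vanishing of the second integral
group homology (the Schur multiplier) is expressed by Hopf's integral homology
formula: for every presentation `1 → R → F → G → 1` of `G` by a free group `F`,
one has `H₂(G, ℤ) ≅ (R ⊓ [F, F]) / [F, R]`, so the Schur multiplier is trivial
iff `R ⊓ [F, F] = [F, R]` for every free presentation. -/
theorem trivial_schur_multiplier (G : Type) [Group G]
    (hcard : Nat.card G = 3 ^ 8 ∨ Nat.card G = 3 ^ 9)
    (hab : abIsElemTricyclic G) (hd2 : d2 G = 3) :
    ∀ (ι : Type) (π : FreeGroup ι →* G), Function.Surjective π →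
      π.ker ⊓ commutator (FreeGroup ι) = ⁅(⊤ : Subgroup (FreeGroup ι)), π.ker⁆ := by
  intro ι π hπ
  obtain ⟨k, hk⟩ : ∃ k : ℕ, Nat.card G = 3 ^ k := by
    rcases hcard with h | h
    · exact ⟨8, h⟩
    · exact ⟨9, h⟩
  haveI hfin : Finite G := by
    apply Nat.finite_of_card_ne_zero
    rw [hk]
    positivity
  apply le_antisymm
  · by_cases hcase : π.ker ⊓ commutator (FreeGroup ι) ≤ SchurAux.bigN π
    · exact SchurAux.branchA π hπ k hk hcase
    · exfalso
      obtain ⟨x₀, hx₀mem, hx₀N⟩ := SetLike.not_le_iff_exists.1 hcase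
      obtain ⟨e⟩ := hab
      have h4 := SchurAux.branchB π hπ e hx₀mem.1 hx₀mem.2 hx₀N
      have heq : d2 G = Module.finrank (ZMod 3)
          (groupCohomology.H2 (Rep.trivial (ZMod 3) G (ZMod 3))) :=
        rfl
      rw [hd2] at heq
      omega
  · exact le_inf (Subgroup.commutator_le_right _ _)
      (Subgroup.commutator_mono le_top le_top)
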